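/- Let f(x) = Σ_{k=1}^K vₖ·max{0, wₖx − bₖ} + ux + s with all wₖ ≠ 0 and all knots tₖ := bₖ/wₖ distinct. Then the second-order total variation of f (the total variation of its derivative f', which is a piecewise-constant function) equals Σ_{k=1}^K |vₖ|·|wₖ|. -/

import Mathlib

open Set Filter

namespace Stmt10Aux

/-- The right-derivative of `y ↦ max 0 (w*y - b)` as a step function with knot `t = b/w`. -/
noncomputable def step (w t : ℝ) (x : ℝ) : ℝ :=
  if 0 < w then (if t ≤ x then w else 0) else (if x < t then w else 0)

lemma step_monotone (w t : ℝ) : Monotone (step w t) := by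
  intro x y hxy
  unfold step
  by_cases hw : 0 < w <;> simp only [hw, if_true, if_false]
  · by_cases hx : t ≤ x
    · simp [hx, hx.trans hxy]
    · by_cases hy : t ≤ y <;> simp [hx, hy] <;> linarith
  · by_cases hy : y < t
    · simp [hy, lt_of_le_of_lt hxy hy]
    · by_cases hx : x < t <;> simp [hx, hy] <;> push_neg at hw <;> linarith

lemma step_sub_le (w t x y : ℝ) : step w t y - step w t x ≤ |w| := by
  unfold step
  by_cases hw : 0 < w <;> simp only [hw, if_true, if_false]
  · rw [abs_of_pos hw]
    by_cases hx : t ≤ x <;> by_cases hy : t ≤ y <;> simp [hx, hy] <;> linarith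
  · push_neg at hw
    rw [abs_of_nonpos hw]
    by_cases hx : x < t <;> by_cases hy : y < t <;> simp [hx, hy] <;> linarith

lemma step_eq_of_not_mem (w t x y : ℝ) (hxy : x ≤ y) (h : ¬(x < t ∧ t ≤ y)) :
    step w t y = step w t x := by
  unfold step
  by_cases hw : 0 < w <;> simp only [hw, if_true, if_false]
  · by_cases hx : t ≤ x
    · simp [hx, hx.trans hxy]
    · push_neg at hx
      have hy : ¬ t ≤ y := fun hy => h ⟨hx, hy⟩
      simp [hy, not_le.2 hx]
  · by_cases hx : x < t
    · have hy : ¬ t ≤ y := fun hy => h ⟨hx, hy⟩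
      simp [hx, not_le.1 hy]
    · push_neg at hx
      have : ¬ y < t := fun hy => hx.not_gt (lt_of_le_of_lt hxy hy)
      simp [this, not_lt.2 hx]

lemma step_jump (w t x y : ℝ) (hw : w ≠ 0) (hx : x < t) (hy : t ≤ y) :
    step w t y - step w t x = |w| := by
  unfold step
  by_cases hwp : 0 < w <;> simp only [hwp, if_true, if_false]
  · simp [hy, not_le.2 hx, abs_of_pos hwp]
  · push_neg at hwp
    simp [hx, not_lt.2 hy, abs_of_nonpos (hwp)]

lemma evar_mul_mono_le (c C : ℝ) (hC : 0 ≤ C) (φ : ℝ → ℝ) (hφ : Monotone φ)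
    (hbd : ∀ x y : ℝ, φ y - φ x ≤ C) :
    eVariationOn (fun x => c * φ x) Set.univ ≤ ENNReal.ofReal (|c| * C) := by
  dsimp only [eVariationOn]
  refine iSup_le ?_
  rintro ⟨n, u, hu, -⟩
  have key : ∀ i : ℕ, edist (c * φ (u (i + 1))) (c * φ (u i))
      = ENNReal.ofReal (|c| * (φ (u (i + 1)) - φ (u i))) := by
    intro i
    rw [edist_dist, Real.dist_eq, ← mul_sub, abs_mul,
      abs_of_nonneg (sub_nonneg.2 (hφ (hu (Nat.le_succ i))))]
  calc (∑ i ∈ Finset.range n, edist (c * φ (u (i + 1))) (c * φ (u i)))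
      = ENNReal.ofReal (∑ i ∈ Finset.range n, |c| * (φ (u (i + 1)) - φ (u i))) := by
        rw [ENNReal.ofReal_sum_of_nonneg (fun i _ =>
          mul_nonneg (abs_nonneg c) (sub_nonneg.2 (hφ (hu (Nat.le_succ i)))))]
        exact Finset.sum_congr rfl fun i _ => key i
    _ ≤ ENNReal.ofReal (|c| * C) := by
        apply ENNReal.ofReal_le_ofReal
        rw [← Finset.mul_sum, Finset.sum_range_sub (fun i => φ (u i)) n]
        exact mul_le_mul_of_nonneg_left (hbd (u 0) (u n)) (abs_nonneg c)

lemma evar_add_le (F G : ℝ → ℝ) (s : Set ℝ) :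
    eVariationOn (fun x => F x + G x) s
      ≤ eVariationOn F s + eVariationOn G s := by
  conv_lhs => dsimp only [eVariationOn]
  refine iSup_le ?_
  rintro ⟨n, u⟩
  calc (∑ i ∈ Finset.range n, edist (F (u.1 (i + 1)) + G (u.1 (i + 1)))
          (F (u.1 i) + G (u.1 i)))
      ≤ ∑ i ∈ Finset.range n, (edist (F (u.1 (i + 1))) (F (u.1 i))
          + edist (G (u.1 (i + 1))) (G (u.1 i))) :=
        Finset.sum_le_sum fun i _ => edist_add_add_le _ _ _ _
    _ = (∑ i ∈ Finset.range n, edist (F (u.1 (i + 1))) (F (u.1 i)))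
          + ∑ i ∈ Finset.range n, edist (G (u.1 (i + 1))) (G (u.1 i)) :=
        Finset.sum_add_distrib
    _ ≤ _ :=
        add_le_add (eVariationOn.sum_le (f := F) (n := n) u.2.1 u.2.2)
          (eVariationOn.sum_le (f := G) (n := n) u.2.1 u.2.2)

lemma evar_const (c : ℝ) (s : Set ℝ) : eVariationOn (fun _ => c) s = 0 :=
  eVariationOn.constant_on (by rintro x ⟨-, -, rfl⟩ y ⟨-, -, rfl⟩; rfl)

lemma evar_sum_le {ι : Type*} (s : Finset ι) (F : ι → ℝ → ℝ) :
    eVariationOn (fun x => ∑ k ∈ s, F k x) Set.univ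
      ≤ ∑ k ∈ s, eVariationOn (F k) Set.univ := by
  induction s using Finset.cons_induction with
  | empty => simp [evar_const]
  | cons a s ha ih =>
      simp only [Finset.sum_cons]
      exact (evar_add_le _ _ _).trans (add_le_add le_rfl ih)

lemma hasDeriv_relu (w b : ℝ) (hw : w ≠ 0) (x : ℝ) :
    HasDerivWithinAt (fun y => max 0 (w * y - b)) (step w (b / w) x) (Set.Ici x) x := by
  have A : HasDerivWithinAt (fun y : ℝ => w * y - b) w (Set.Ici x) x := by
    simpa using (((hasDerivAt_id x).const_mul w).sub_const b).hasDerivWithinAt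
  rcases hw.lt_or_gt with hneg | hpos
  · by_cases ht : x < b / w
    · -- w < 0, before the knot: locally max = w*y - b, derivative w
      have hx0 : 0 < w * x - b := by
        rw [lt_div_iff_of_neg hneg] at ht
        nlinarith [ht]
      have hset : {y : ℝ | 0 < w * y - b} ∈ nhds x :=
        (isOpen_lt continuous_const (by fun_prop)).mem_nhds hx0
      have heq : (fun y => max 0 (w * y - b)) =ᶠ[nhdsWithin x (Set.Ici x)]
          (fun y : ℝ => w * y - b) := by
        filter_upwards [nhdsWithin_le_nhds hset] with y hy
        exact max_eq_right hy.le
      have := A.congr_of_eventuallyEq heq (max_eq_right hx0.le)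
      simpa [step, not_lt.2 hneg.le, ht] using this
    · -- w < 0, after the knot: max = 0 on Ici x
      push_neg at ht
      rw [div_le_iff_of_neg hneg] at ht
      have hzero : ∀ y ∈ Set.Ici x, max 0 (w * y - b) = 0 := by
        intro y hy
        have : w * y ≤ w * x := mul_le_mul_of_nonpos_left hy hneg.le
        have : w * y - b ≤ 0 := by nlinarith [ht]
        exact max_eq_left this
      have := (hasDerivWithinAt_const x (Set.Ici x) (0 : ℝ)).congr hzero
        (hzero x Set.self_mem_Ici)
      simpa [step, not_lt.2 hneg.le, not_lt.2 (by rw [div_le_iff_of_neg hneg]; nlinarith [ht] : b / w ≤ x)] using this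
  · by_cases ht : b / w ≤ x
    · -- w > 0, after the knot: max = w*y - b on Ici x
      rw [div_le_iff₀ hpos] at ht
      have heq : ∀ y ∈ Set.Ici x, max 0 (w * y - b) = w * y - b := by
        intro y hy
        have : w * x ≤ w * y := mul_le_mul_of_nonneg_left hy hpos.le
        exact max_eq_right (by nlinarith [ht])
      have := A.congr heq (heq x Set.self_mem_Ici)
      simpa [step, hpos, (div_le_iff₀ hpos).2 ht] using this
    · -- w > 0, before the knot: locally max = 0
      push_neg at ht
      rw [lt_div_iff₀ hpos] at ht
      have hx0 : w * x - b < 0 := by nlinarith [ht]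
      have hset : {y : ℝ | w * y - b < 0} ∈ nhds x :=
        (isOpen_lt (by fun_prop) continuous_const).mem_nhds hx0
      have heq : (fun y => max 0 (w * y - b)) =ᶠ[nhdsWithin x (Set.Ici x)]
          (fun _ : ℝ => 0) := by
        filter_upwards [nhdsWithin_le_nhds hset] with y hy
        exact max_eq_left hy.le
      have := (hasDerivWithinAt_const x (Set.Ici x) (0 : ℝ)).congr_of_eventuallyEq heq
        (max_eq_left hx0.le)
      simpa [step, hpos, not_le.2 ((lt_div_iff₀ hpos).2 ht)] using this

end Stmt10Aux

open Stmt10Aux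

/-- For a ReLU network with skip connection and distinct knots `bₖ/wₖ`, the
second-order total variation of `f` — the total variation of its (right)
derivative — equals the path-norm `Σ |vₖ|·|wₖ|`. -/
theorem stmt_10 (K : ℕ) (v w b : Fin K → ℝ) (u s : ℝ)
    (hw : ∀ k, w k ≠ 0)
    (hknots : ∀ j k, j ≠ k → b j / w j ≠ b k / w k)
    (f : ℝ → ℝ)
    (hf : ∀ x : ℝ, f x = ∑ k, v k * max 0 (w k * x - b k) + u * x + s) :
    eVariationOn (fun x => derivWithin f (Set.Ici x) x) Set.univ
      = ENNReal.ofReal (∑ k, |v k| * |w k|) := by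
  classical
  set t : Fin K → ℝ := fun k => b k / w k with ht
  set g : ℝ → ℝ := fun x => (∑ k, v k * step (w k) (t k) x) + u with hg
  -- the right derivative of f is g
  have hD : ∀ x : ℝ, HasDerivWithinAt f (g x) (Set.Ici x) x := by
    intro x
    have h1 : HasDerivWithinAt
        (fun y => ∑ k, v k * max 0 (w k * y - b k) + u * y + s) (g x) (Set.Ici x) x := by
      have hsum : HasDerivWithinAt (fun y => ∑ k, v k * max 0 (w k * y - b k))
          (∑ k, v k * step (w k) (t k) x) (Set.Ici x) x :=
        HasDerivWithinAt.fun_sum fun k _ => (hasDeriv_relu (w k) (b k) (hw k) x).const_mul (v k)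
      have hlin : HasDerivWithinAt (fun y : ℝ => u * y) u (Set.Ici x) x := by
        simpa using ((hasDerivAt_id x).const_mul u).hasDerivWithinAt
      simpa using (hsum.add hlin).add_const s
    exact h1.congr (fun y _ => hf y) (hf x)
  have hgeq : (fun x => derivWithin f (Set.Ici x) x) = g := by
    funext x
    exact (hD x).derivWithin (uniqueDiffOn_Ici x x Set.self_mem_Ici)
  rw [hgeq]
  -- upper bound
  have hupper : eVariationOn g Set.univ ≤ ENNReal.ofReal (∑ k, |v k| * |w k|) := by
    have h1 : eVariationOn g Set.univ
        ≤ eVariationOn (fun x => ∑ k, v k * step (w k) (t k) x) Set.univ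
          + eVariationOn (fun _ : ℝ => u) Set.univ := evar_add_le _ _ _
    rw [evar_const, add_zero] at h1
    refine h1.trans ((evar_sum_le Finset.univ
      (fun k x => v k * step (w k) (t k) x)).trans ?_)
    rw [ENNReal.ofReal_sum_of_nonneg (fun k _ => mul_nonneg (abs_nonneg _) (abs_nonneg _))]
    refine Finset.sum_le_sum fun k _ => ?_
    exact evar_mul_mono_le (v k) (|w k|) (abs_nonneg _) _ (step_monotone (w k) (t k))
      (fun x y => step_sub_le (w k) (t k) x y)
  -- lower bound
  rcases Nat.eq_zero_or_pos K with hK | hK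
  · subst hK
    refine le_antisymm hupper ?_
    simp
  -- key jump computation
  have hkey : ∀ (k₀ : Fin K) (x y : ℝ), x ≤ y → x < t k₀ → t k₀ ≤ y →
      (∀ k, k ≠ k₀ → ¬(x < t k ∧ t k ≤ y)) → g y - g x = v k₀ * |w k₀| := by
    intro k₀ x y hxy hx hy hoth
    have : g y - g x = ∑ k, v k * (step (w k) (t k) y - step (w k) (t k) x) := by
      simp only [hg, mul_sub]
      rw [Finset.sum_sub_distrib]
      ring
    rw [this, Finset.sum_eq_single k₀]
    · rw [step_jump (w k₀) (t k₀) x y (hw k₀) hx hy]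
    · intro k _ hk
      rw [step_eq_of_not_mem (w k) (t k) x y hxy (hoth k hk)]
      ring
    · intro h; exact absurd (Finset.mem_univ k₀) h
  -- sorted knots
  set σ : Equiv.Perm (Fin K) := Tuple.sort t with hσ
  have htinj : Function.Injective t := fun j k h => by
    by_contra hne; exact hknots j k hne h
  have hsm : StrictMono (t ∘ σ) :=
    (Tuple.monotone_sort t).strictMono_of_injective (htinj.comp σ.injective)
  -- the test points
  set p : ℕ → ℝ := fun i =>
    if _ : i = 0 then t (σ ⟨0, hK⟩) - 1
    else t (σ ⟨min (i - 1) (K - 1), by omega⟩) with hp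
  have hp0 : p 0 = t (σ ⟨0, hK⟩) - 1 := by simp [hp]
  have hpsucc : ∀ (j : ℕ) (h : min j (K - 1) < K),
      p (j + 1) = t (σ ⟨min j (K - 1), h⟩) := by
    intro j h
    simp only [hp]
    rw [dif_neg (Nat.succ_ne_zero j)]
    exact congrArg t (congrArg σ (Fin.ext (by simp)))
  have hpmono : Monotone p := by
    apply monotone_nat_of_le_succ
    intro i
    match i with
    | 0 =>
        rw [hp0, hpsucc 0 (by omega)]
        have h0 : (⟨min 0 (K - 1), by omega⟩ : Fin K) = ⟨0, hK⟩ := Fin.ext (by simp)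
        rw [h0]
        linarith
    | Nat.succ j =>
        rw [hpsucc j (by omega), hpsucc (j + 1) (by omega)]
        exact hsm.monotone (by rw [Fin.mk_le_mk]; omega)
  -- evaluate each increment
  have hterm : ∀ (i : ℕ) (hi : i < K),
      edist (g (p (i + 1))) (g (p i))
        = ENNReal.ofReal (|v (σ ⟨i, hi⟩)| * |w (σ ⟨i, hi⟩)|) := by
    intro i hi
    set k₀ : Fin K := σ ⟨i, hi⟩ with hk₀
    have hp1 : p (i + 1) = t k₀ := by
      rw [hpsucc i (by omega)]
      exact congrArg t (congrArg σ (Fin.ext (by simp; omega)))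
    have hxlt : p i < t k₀ := by
      rcases Nat.eq_zero_or_pos i with rfl | hipos
      · rw [hp0, hk₀]
        have h0 : (⟨0, hK⟩ : Fin K) = ⟨0, hi⟩ := rfl
        rw [h0]
        linarith
      · obtain ⟨j, rfl⟩ := Nat.exists_eq_succ_of_ne_zero (by omega : i ≠ 0)
        rw [hpsucc j (by omega), hk₀]
        exact hsm (show (⟨min j (K - 1), by omega⟩ : Fin K) < ⟨j + 1, hi⟩ by
          rw [Fin.mk_lt_mk]; omega)
    have hoth : ∀ k, k ≠ k₀ → ¬(p i < t k ∧ t k ≤ p (i + 1)) := by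
      intro k hk
      rintro ⟨h1, h2⟩
      obtain ⟨m, rfl⟩ : ∃ m, σ m = k := ⟨σ.symm k, σ.apply_symm_apply k⟩
      rw [hp1] at h2
      have hmle : m ≤ (⟨i, hi⟩ : Fin K) := by
        by_contra hlt
        push_neg at hlt
        exact absurd h2 (not_le.2 (hsm hlt))
      have hmne : m ≠ (⟨i, hi⟩ : Fin K) := fun h => hk (by rw [hk₀, h])
      have hmlt : (m : ℕ) < i := lt_of_le_of_ne (by exact_mod_cast hmle)
        (fun h => hmne (Fin.ext h))
      have hi0 : i ≠ 0 := by omega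
      obtain ⟨j, rfl⟩ := Nat.exists_eq_succ_of_ne_zero hi0
      have hle : t (σ m) ≤ p (j + 1) := by
        rw [hpsucc j (by omega)]
        refine hsm.monotone ?_
        rw [Fin.le_def]
        have := m.is_lt
        simp only []
        omega
      exact absurd h1 (not_lt.2 hle)
    have := hkey k₀ (p i) (p (i + 1)) (hpmono (Nat.le_succ i)) hxlt
      (by rw [hp1]) hoth
    rw [edist_dist, Real.dist_eq, this, abs_mul, abs_abs]
  -- conclude
  refine le_antisymm hupper ?_
  have hsum := eVariationOn.sum_le (f := g) (n := K) hpmono (fun i => Set.mem_univ (p i))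
  calc ENNReal.ofReal (∑ k, |v k| * |w k|)
      = ∑ i ∈ Finset.range K, edist (g (p (i + 1))) (g (p i)) := by
        rw [← Equiv.sum_comp σ (fun k => |v k| * |w k|),
          ENNReal.ofReal_sum_of_nonneg (fun k _ => mul_nonneg (abs_nonneg _) (abs_nonneg _)),
          ← Fin.sum_univ_eq_sum_range (fun i => edist (g (p (i + 1))) (g (p i))) K]
        refine Finset.sum_congr rfl fun m _ => ?_
        rw [hterm m m.is_lt]
    _ ≤ eVariationOn g Set.univ := hsum
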